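/- Bounded local drift: if η_L ≤ 1/(8·L·K), then for every round t and every local step k ∈ {0,…,K}, the local iterates of generalized FedAvg satisfy (1/m)·Σ_{i=1}^m E_t[‖x_{t,k}^i − x_t‖²] ≤ 5·K·η_L²·(σ_L² + 6·K·σ_G²) + 30·K²·η_L²·‖∇f(x_t)‖². -/

import Mathlib

open MeasureTheory ProbabilityTheory Finset

lemma helperA {Ω : Type} {m : MeasurableSpace Ω} [m0 : MeasurableSpace Ω]
    (hm : m ≤ m0) {μ : Measure Ω} [IsFiniteMeasure μ] {d : ℕ}
    {N : Ω → EuclideanSpace ℝ (Fin d)} (hNint : Integrable N μ)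
    (hN : μ[N|m] =ᵐ[μ] 0) (c : Fin d) :
    μ[fun ω => N ω c|m] =ᵐ[μ] 0 := by
  have h0 : (fun _ : Ω => (0:ℝ)) =ᵐ[μ] μ[fun ω => N ω c|m] := by
    refine ae_eq_condExp_of_forall_setIntegral_eq (μ := μ) hm ?_ ?_ ?_ ?_
    · exact (EuclideanSpace.proj (𝕜 := ℝ) c).integrable_comp hNint
    · intro s _ _; exact integrableOn_const
    · intro s hs hμs
      have h1 : ∫ x in s, N x c ∂μ = (EuclideanSpace.proj (𝕜 := ℝ) c) (∫ x in s, N x ∂μ) :=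
        ContinuousLinearMap.integral_comp_comm (EuclideanSpace.proj c) hNint.integrableOn
      have h2 : ∫ x in s, N x ∂μ = 0 := by
        rw [← setIntegral_condExp hm hNint hs]
        calc ∫ x in s, (μ[N|m]) x ∂μ = ∫ x in s, (0:EuclideanSpace ℝ (Fin d)) ∂μ :=
              setIntegral_congr_ae (hm s hs) (hN.mono fun ω h _ => h)
          _ = 0 := by simp
      simp [h1, h2]
    · exact aestronglyMeasurable_const
  exact h0.symm

lemma coord_abs_le_norm {d : ℕ} (x : EuclideanSpace ℝ (Fin d)) (c : Fin d) : |x c| ≤ ‖x‖ := by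
  rw [EuclideanSpace.norm_eq, ← Real.sqrt_sq_eq_abs]
  refine Real.sqrt_le_sqrt ?_
  simp only [Real.norm_eq_abs, sq_abs]
  exact Finset.single_le_sum (f := fun j => x j ^ 2) (fun j _ => sq_nonneg _)
    (Finset.mem_univ c)

lemma helperB {Ω : Type} {m : MeasurableSpace Ω} [m0 : MeasurableSpace Ω]
    (hm : m ≤ m0) {μ : Measure Ω} [IsProbabilityMeasure μ] {d : ℕ}
    {A N : Ω → EuclideanSpace ℝ (Fin d)}
    (hA : StronglyMeasurable[m] A)
    (hAsq : Integrable (fun ω => ‖A ω‖ ^ 2) μ)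
    (hNm : AEStronglyMeasurable N μ) (hNint : Integrable N μ)
    (hNsq : Integrable (fun ω => ‖N ω‖ ^ 2) μ)
    (hN : μ[N|m] =ᵐ[μ] 0) :
    ∫ ω, (inner ℝ (A ω) (N ω) : ℝ) ∂μ = 0 := by
  have hAmeas : AEStronglyMeasurable A μ := (hA.mono hm).aestronglyMeasurable
  have hprod : ∀ c : Fin d, Integrable (fun ω => A ω c * N ω c) μ := by
    intro c
    refine Integrable.mono' ((hAsq.add hNsq).div_const 2)
      (((EuclideanSpace.proj (𝕜 := ℝ) c).continuous.comp_aestronglyMeasurable hAmeas).mul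
        ((EuclideanSpace.proj (𝕜 := ℝ) c).continuous.comp_aestronglyMeasurable hNm))
      (Filter.Eventually.of_forall fun ω => ?_)
    have h1 := coord_abs_le_norm (A ω) c
    have h2 := coord_abs_le_norm (N ω) c
    have h3 : (0:ℝ) ≤ ‖A ω‖ := norm_nonneg _
    have h4 : (0:ℝ) ≤ ‖N ω‖ := norm_nonneg _
    simp only [Pi.add_apply]
    rw [Real.norm_eq_abs, abs_mul]
    nlinarith [abs_nonneg (A ω c), abs_nonneg (N ω c), sq_nonneg (‖A ω‖ - ‖N ω‖),
      mul_le_mul h1 h2 (abs_nonneg _) h3]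
  have hc0 : ∀ c : Fin d, ∫ ω, A ω c * N ω c ∂μ = 0 := by
    intro c
    have hNc := helperA hm hNint hN c
    have hAc : StronglyMeasurable[m] fun ω => A ω c :=
      (EuclideanSpace.proj (𝕜 := ℝ) c).continuous.comp_stronglyMeasurable hA
    have hmul := condExp_mul_of_stronglyMeasurable_left (μ := μ) hAc
      (show Integrable ((fun ω => A ω c) * fun ω => N ω c) μ from hprod c)
      ((EuclideanSpace.proj (𝕜 := ℝ) c).integrable_comp hNint)
    have : μ[(fun ω => A ω c) * fun ω => N ω c|m] =ᵐ[μ] 0 := by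
      refine hmul.trans (hNc.mono fun ω h => ?_)
      simp only [Pi.mul_apply, h, Pi.zero_apply, mul_zero]
    calc ∫ ω, A ω c * N ω c ∂μ
        = ∫ ω, (μ[(fun ω => A ω c) * fun ω => N ω c|m]) ω ∂μ :=
          (integral_condExp hm).symm
      _ = 0 := by rw [integral_congr_ae this]; simp
  have hinner : ∀ ω, (inner ℝ (A ω) (N ω) : ℝ) = ∑ c, A ω c * N ω c := by
    intro ω
    simp [PiLp.inner_apply, RCLike.inner_apply, conj_trivial, mul_comm]
  calc ∫ ω, (inner ℝ (A ω) (N ω) : ℝ) ∂μ = ∫ ω, ∑ c, A ω c * N ω c ∂μ := by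
        simp_rw [hinner]
    _ = ∑ c, ∫ ω, A ω c * N ω c ∂μ := integral_finset_sum _ fun c _ => hprod c
    _ = 0 := by simp [hc0]

set_option maxHeartbeats 2000000 in
/-- **Bounded local drift (Lemma: bounded `x_{t,k}^i − x_t`).**
Setting: one round of generalized FedAvg, conditioned on the current server iterate
`x_t = xt` (a deterministic point, since `E_t` conditions on `x_t`).  Each worker
`i ∈ {1,…,m}` runs `K` local SGD steps `y i (k+1) = y i k − η_L • g i k` starting from
`y i 0 = xt`, where the stochastic gradients `g i k` are conditionally unbiased
(`E[g i k | 𝒢 k] = ∇F i (y i k)` for a filtration `𝒢` recording all information up to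
the evaluation point), have conditional variance at most `σ_L²`, and the noises are
mutually conditionally independent across `i` (independence across `k` is encoded by
the filtration structure).  The local losses `F i` are differentiable with
`L`-Lipschitz gradients, `f = (1/m) ∑ i, F i`, and `‖∇F i x − ∇f x‖² ≤ σ_G²` for all
`x, i`.  If `η_L ≤ 1/(8LK)`, then for every `k ∈ {0,…,K}`,
`(1/m) ∑ i, E_t[‖y i k − x_t‖²] ≤ 5Kη_L²(σ_L² + 6Kσ_G²) + 30K²η_L²‖∇f(x_t)‖²`. -/
theorem bounded_local_drift
    {d m K : ℕ} (hd : 0 < d) (hm : 0 < m) (hK : 0 < K)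
    (L σL σG ηL : ℝ) (hL : 0 < L) (hσL : 0 ≤ σL) (hσG : 0 ≤ σG) (hηL : 0 < ηL)
    (F : Fin m → EuclideanSpace ℝ (Fin d) → ℝ)
    (hFdiff : ∀ i, Differentiable ℝ (F i))
    (hFlip : ∀ i, LipschitzWith (Real.toNNReal L) (fun x => gradient (F i) x))
    (f : EuclideanSpace ℝ (Fin d) → ℝ)
    (hf : f = fun x => (1 / (m : ℝ)) * ∑ i, F i x)
    (hhet : ∀ i x, ‖gradient (F i) x - gradient f x‖ ^ 2 ≤ σG ^ 2)
    {Ω : Type} [MeasureSpace Ω] [IsProbabilityMeasure (ℙ : Measure Ω)]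
    [StandardBorelSpace Ω]
    (𝒢 : ℕ → MeasurableSpace Ω)
    (h𝒢 : ∀ k, 𝒢 k ≤ (inferInstance : MeasurableSpace Ω)) (h𝒢mono : Monotone 𝒢)
    (xt : EuclideanSpace ℝ (Fin d))
    (g y : Fin m → ℕ → Ω → EuclideanSpace ℝ (Fin d))
    (hy0 : ∀ i ω, y i 0 ω = xt)
    (hyrec : ∀ i k ω, k < K → y i (k + 1) ω = y i k ω - ηL • g i k ω)
    (hymeas : ∀ i k, Measurable[𝒢 k] (y i k))
    (hgmeas : ∀ i k, Measurable[𝒢 (k + 1)] (g i k))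
    (hgint : ∀ i k, Integrable (g i k) ℙ)
    (hgsq : ∀ i k, Integrable (fun ω => ‖g i k ω‖ ^ 2) ℙ)
    (hunbiased : ∀ i k, (ℙ : Measure Ω)[g i k | 𝒢 k]
        =ᵐ[ℙ] fun ω => gradient (F i) (y i k ω))
    (hvar : ∀ i k, (ℙ : Measure Ω)[(fun ω => ‖g i k ω - gradient (F i) (y i k ω)‖ ^ 2) | 𝒢 k]
        ≤ᵐ[ℙ] fun _ => σL ^ 2)
    (hindep : ∀ k, iCondIndepFun (𝒢 k) (h𝒢 k) (m := fun _ : Fin m => inferInstance)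
        (fun i ω => g i k ω - gradient (F i) (y i k ω)) ℙ)
    (hηL8 : ηL ≤ 1 / (8 * L * K)) :
    ∀ k ≤ K, (1 / (m : ℝ)) * ∑ i, ∫ ω, ‖y i k ω - xt‖ ^ 2 ∂ℙ
      ≤ 5 * K * ηL ^ 2 * (σL ^ 2 + 6 * K * σG ^ 2)
        + 30 * K ^ 2 * ηL ^ 2 * ‖gradient f xt‖ ^ 2 := by
  have hKpos : (0:ℝ) < (K:ℝ) := by exact_mod_cast hK
  set Z : ℝ := ‖gradient f xt‖ ^ 2 with hZ
  have hZ0 : 0 ≤ Z := sq_nonneg _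
  set B : ℝ := 2 * K * ηL ^ 2 * σL ^ 2 + 6 * K ^ 2 * ηL ^ 2 * (σG ^ 2 + Z) with hB
  have hB0 : 0 ≤ B := by positivity
  set ρ : ℝ := 3 / (32 * K) with hρ
  have hρ0 : 0 < ρ := by positivity
  -- bound on ηL·L
  have hηLL : ηL * L * K ≤ 1 / 8 := by
    have h8 : 0 < 8 * L * (K:ℝ) := by positivity
    rw [le_div_iff₀ h8] at hηL8
    nlinarith
  -- main per-worker estimate
  have key : ∀ (i : Fin m) (k : ℕ), k ≤ K →
      ∫ ω, ‖y i k ω - xt‖ ^ 2 ∂ℙ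
        ≤ 5 * K * ηL ^ 2 * σL ^ 2 + 30 * K ^ 2 * ηL ^ 2 * σG ^ 2 + 30 * K ^ 2 * ηL ^ 2 * Z := by
    intro i
    set G : ℕ → Ω → EuclideanSpace ℝ (Fin d) := fun k ω => gradient (F i) (y i k ω) with hG
    set N : ℕ → Ω → EuclideanSpace ℝ (Fin d) := fun k ω => g i k ω - G k ω with hN
    set e : ℕ → ℝ := fun k => ∫ ω, ‖y i k ω - xt‖ ^ 2 ∂ℙ with he
    have hgradcont : Continuous fun x => gradient (F i) x := (hFlip i).continuous
    have hym : ∀ k, Measurable (y i k) := fun k => (hymeas i k).mono (h𝒢 k) le_rfl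
    have hyaesm : ∀ k, AEStronglyMeasurable (y i k) ℙ := fun k =>
      (hym k).aestronglyMeasurable
    have hgm : ∀ k, AEStronglyMeasurable (g i k) ℙ := fun k =>
      ((hgmeas i k).mono (h𝒢 (k+1)) le_rfl).aestronglyMeasurable
    have hGaesm : ∀ k, AEStronglyMeasurable (G k) ℙ := fun k =>
      hgradcont.comp_aestronglyMeasurable (hyaesm k)
    have hNaesm : ∀ k, AEStronglyMeasurable (N k) ℙ := fun k => (hgm k).sub (hGaesm k)
    -- explicit form of the iterates
    have hyeq : ∀ k, k ≤ K → ∀ ω, y i k ω = xt - ηL • ∑ j ∈ Finset.range k, g i j ω := by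
      intro k
      induction k with
      | zero => intro _ ω; simp [hy0 i ω]
      | succ n ih =>
        intro hn ω
        have hnK : n < K := hn
        rw [hyrec i n ω hnK, ih (Nat.le_of_succ_le hn) ω, Finset.sum_range_succ, smul_add,
          sub_sub]
    have hydiff : ∀ k, k ≤ K → ∀ ω,
        y i k ω - xt = -(ηL • ∑ j ∈ Finset.range k, g i j ω) := by
      intro k hk ω; rw [hyeq k hk ω]; abel
    have hynorm : ∀ k, k ≤ K → ∀ ω,
        ‖y i k ω - xt‖ ≤ ηL * ∑ j ∈ Finset.range k, ‖g i j ω‖ := by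
      intro k hk ω
      rw [hydiff k hk ω, norm_neg, norm_smul, Real.norm_eq_abs, abs_of_pos hηL]
      exact mul_le_mul_of_nonneg_left (norm_sum_le _ _) hηL.le
    have hysqbnd : ∀ k, k ≤ K → ∀ ω,
        ‖y i k ω - xt‖ ^ 2 ≤ ηL ^ 2 * (k * ∑ j ∈ Finset.range k, ‖g i j ω‖ ^ 2) := by
      intro k hk ω
      have h1 := hynorm k hk ω
      have h2 : (∑ j ∈ Finset.range k, ‖g i j ω‖) ^ 2
          ≤ k * ∑ j ∈ Finset.range k, ‖g i j ω‖ ^ 2 := by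
        simpa using sq_sum_le_card_mul_sum_sq (s := Finset.range k)
          (f := fun j => ‖g i j ω‖)
      have h0 : (0:ℝ) ≤ ‖y i k ω - xt‖ := norm_nonneg _
      nlinarith [norm_nonneg (y i k ω - xt),
        Finset.sum_nonneg (fun j (_ : j ∈ Finset.range k) => norm_nonneg (g i j ω))]
    -- integrability of ‖y - xt‖, ‖y - xt‖²
    have hydint : ∀ k, k ≤ K → Integrable (fun ω => ‖y i k ω - xt‖) ℙ := by
      intro k hk
      refine Integrable.mono'
        ((integrable_finset_sum (Finset.range k) fun j _ => (hgint i j).norm).const_mul ηL)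
        (((hyaesm k).sub aestronglyMeasurable_const).norm) ?_
      filter_upwards with ω
      rw [Real.norm_eq_abs, abs_of_nonneg (norm_nonneg _)]
      exact hynorm k hk ω
    have hysqint : ∀ k, k ≤ K → Integrable (fun ω => ‖y i k ω - xt‖ ^ 2) ℙ := by
      intro k hk
      refine Integrable.mono'
        (((integrable_finset_sum (Finset.range k) fun j _ => hgsq i j).const_mul
          (k:ℝ)).const_mul (ηL ^ 2))
        ?_ ?_
      · have h : AEStronglyMeasurable (fun ω => ‖y i k ω - xt‖) ℙ :=
          ((hyaesm k).sub aestronglyMeasurable_const).norm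
        exact h.pow 2
      · filter_upwards with ω
        rw [Real.norm_eq_abs, abs_of_nonneg (by positivity)]
        simpa [mul_assoc] using hysqbnd k hk ω
    -- bounds and integrability for G
    have hGbnd : ∀ k ω, ‖G k ω‖ ≤ ‖gradient (F i) xt‖ + L * ‖y i k ω - xt‖ := by
      intro k ω
      have hlip := (hFlip i).dist_le_mul (y i k ω) xt
      rw [dist_eq_norm, dist_eq_norm, Real.coe_toNNReal L hL.le] at hlip
      have habel : gradient (F i) xt + (G k ω - gradient (F i) xt) = G k ω := by abel
      calc ‖G k ω‖ = ‖gradient (F i) xt + (G k ω - gradient (F i) xt)‖ := by rw [habel]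
        _ ≤ ‖gradient (F i) xt‖ + ‖G k ω - gradient (F i) xt‖ := norm_add_le _ _
        _ ≤ ‖gradient (F i) xt‖ + L * ‖y i k ω - xt‖ := by
            exact add_le_add_right hlip _
    have hGint : ∀ k, k ≤ K → Integrable (G k) ℙ := by
      intro k hk
      refine Integrable.mono' ((integrable_const ‖gradient (F i) xt‖).add
        ((hydint k hk).const_mul L)) (hGaesm k) ?_
      filter_upwards with ω
      exact hGbnd k ω
    have hGsqint : ∀ k, k ≤ K → Integrable (fun ω => ‖G k ω‖ ^ 2) ℙ := by
      intro k hk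
      refine Integrable.mono' ((integrable_const (2 * ‖gradient (F i) xt‖ ^ 2)).add
        (((hysqint k hk).const_mul (2 * L ^ 2)))) ((hGaesm k).norm.pow 2) ?_
      filter_upwards with ω
      simp only [Pi.add_apply]
      rw [Real.norm_eq_abs, abs_of_nonneg (by positivity)]
      have h := hGbnd k ω
      nlinarith [norm_nonneg (G k ω), norm_nonneg (y i k ω - xt), hL.le,
        norm_nonneg (gradient (F i) xt),
        mul_self_le_mul_self (norm_nonneg (G k ω)) h,
        sq_nonneg (‖gradient (F i) xt‖ - L * ‖y i k ω - xt‖)]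
    -- integrability for N
    have hNint : ∀ k, k ≤ K → Integrable (N k) ℙ := fun k hk => (hgint i k).sub (hGint k hk)
    have hNsqint : ∀ k, k ≤ K → Integrable (fun ω => ‖N k ω‖ ^ 2) ℙ := by
      intro k hk
      refine Integrable.mono' (((hgsq i k).const_mul 2).add
        ((hGsqint k hk).const_mul 2)) ((hNaesm k).norm.pow 2) ?_
      filter_upwards with ω
      simp only [Pi.add_apply]
      rw [Real.norm_eq_abs, abs_of_nonneg (by positivity)]
      have h : ‖N k ω‖ ≤ ‖g i k ω‖ + ‖G k ω‖ := norm_sub_le _ _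
      nlinarith [norm_nonneg (N k ω), norm_nonneg (g i k ω), norm_nonneg (G k ω),
        mul_self_le_mul_self (norm_nonneg (N k ω)) h,
        sq_nonneg (‖g i k ω‖ - ‖G k ω‖)]
    -- strong measurability wrt the filtration
    have hG𝒢 : ∀ k, StronglyMeasurable[𝒢 k] (G k) := fun k =>
      hgradcont.comp_stronglyMeasurable (hymeas i k).stronglyMeasurable
    have hN𝒢 : ∀ k, StronglyMeasurable[𝒢 (k+1)] (N k) := fun k =>
      (hgmeas i k).stronglyMeasurable.sub ((hG𝒢 k).mono (h𝒢mono (Nat.le_succ k)))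
    -- conditional expectation of the noise is zero
    have hNcond : ∀ k, k ≤ K → (ℙ : Measure Ω)[N k|𝒢 k] =ᵐ[ℙ] 0 := by
      intro k hk
      have h1 := condExp_sub (μ := ℙ) (m := 𝒢 k) (hgint i k) (hGint k hk)
      have h2 : (ℙ : Measure Ω)[G k|𝒢 k] = G k :=
        condExp_of_stronglyMeasurable (h𝒢 k) (hG𝒢 k) (hGint k hk)
      refine h1.trans ?_
      rw [h2]
      filter_upwards [hunbiased i k] with ω hω
      simp only [Pi.sub_apply, Pi.zero_apply]
      rw [hω]
      simp [hG]
    -- second moment of the noise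
    have hNsqle : ∀ k, ∫ ω, ‖N k ω‖ ^ 2 ∂ℙ ≤ σL ^ 2 := by
      intro k
      have h1 : ∫ ω, ‖N k ω‖ ^ 2 ∂ℙ
          = ∫ ω, ((ℙ : Measure Ω)[(fun ω => ‖g i k ω - gradient (F i) (y i k ω)‖ ^ 2)|𝒢 k]) ω ∂ℙ :=
        (integral_condExp (h𝒢 k)).symm
      rw [h1]
      calc ∫ ω, ((ℙ : Measure Ω)[(fun ω => ‖g i k ω - gradient (F i) (y i k ω)‖ ^ 2)|𝒢 k]) ω ∂ℙ
          ≤ ∫ _, σL ^ 2 ∂ℙ := integral_mono_ae integrable_condExp (integrable_const _) (hvar i k)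
        _ = σL ^ 2 := by simp
    -- orthogonality of noises at different times
    have hinnerint : ∀ j l, j ≤ K → l ≤ K →
        Integrable (fun ω => (inner ℝ (N j ω) (N l ω) : ℝ)) ℙ := by
      intro j l hj hl
      refine Integrable.mono' (((hNsqint j hj).add (hNsqint l hl)).div_const 2)
        ((hNaesm j).inner (hNaesm l)) ?_
      filter_upwards with ω
      have h := abs_real_inner_le_norm (N j ω) (N l ω)
      rw [Real.norm_eq_abs]
      have h2 : ‖N j ω‖ * ‖N l ω‖ ≤ (‖N j ω‖ ^ 2 + ‖N l ω‖ ^ 2) / 2 := by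
        nlinarith [sq_nonneg (‖N j ω‖ - ‖N l ω‖)]
      simpa using h.trans h2
    have horth : ∀ j l, j < l → l ≤ K → ∫ ω, (inner ℝ (N j ω) (N l ω) : ℝ) ∂ℙ = 0 := by
      intro j l hjl hl
      refine helperB (h𝒢 l) ((hN𝒢 j).mono (h𝒢mono hjl)) (hNsqint j (le_trans hjl.le hl))
        (hNaesm l) (hNint l hl) (hNsqint l hl) (hNcond l hl)
    -- second moment of the sum of noises
    have hsumN : ∀ k, k ≤ K →
        ∫ ω, ‖∑ j ∈ Finset.range k, N j ω‖ ^ 2 ∂ℙ ≤ k * σL ^ 2 := by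
      intro k hk
      have hmem : ∀ j ∈ Finset.range k, j ≤ K := fun j hj =>
        le_trans (Nat.le_of_lt_succ (Nat.lt_succ_of_lt (Finset.mem_range.1 hj))) hk
      have hexpand : ∀ ω, ‖∑ j ∈ Finset.range k, N j ω‖ ^ 2
          = ∑ j ∈ Finset.range k, ∑ l ∈ Finset.range k, (inner ℝ (N j ω) (N l ω) : ℝ) := by
        intro ω
        rw [← real_inner_self_eq_norm_sq, sum_inner]
        exact Finset.sum_congr rfl fun j _ => by rw [inner_sum]
      calc ∫ ω, ‖∑ j ∈ Finset.range k, N j ω‖ ^ 2 ∂ℙ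
          = ∑ j ∈ Finset.range k, ∑ l ∈ Finset.range k,
              ∫ ω, (inner ℝ (N j ω) (N l ω) : ℝ) ∂ℙ := by
            rw [integral_congr_ae (Filter.Eventually.of_forall hexpand)]
            rw [integral_finset_sum _ fun j hj =>
              integrable_finset_sum _ fun l hl => hinnerint j l (hmem j hj) (hmem l hl)]
            exact Finset.sum_congr rfl fun j hj =>
              integral_finset_sum _ fun l hl => hinnerint j l (hmem j hj) (hmem l hl)
        _ = ∑ j ∈ Finset.range k, ∫ ω, (inner ℝ (N j ω) (N j ω) : ℝ) ∂ℙ := by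
            refine Finset.sum_congr rfl fun j hj => ?_
            refine Finset.sum_eq_single_of_mem j hj fun l hl hne => ?_
            rcases lt_or_gt_of_ne hne with h | h
            · have := horth l j h (hmem j hj)
              rw [← this]
              exact integral_congr_ae (Filter.Eventually.of_forall fun ω =>
                real_inner_comm _ _)
            · exact horth j l h (hmem l hl)
        _ ≤ ∑ _j ∈ Finset.range k, σL ^ 2 := by
            refine Finset.sum_le_sum fun j _ => ?_
            have : ∫ ω, (inner ℝ (N j ω) (N j ω) : ℝ) ∂ℙ = ∫ ω, ‖N j ω‖ ^ 2 ∂ℙ :=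
              integral_congr_ae (Filter.Eventually.of_forall fun ω =>
                real_inner_self_eq_norm_sq _)
            rw [this]
            exact hNsqle j
        _ = k * σL ^ 2 := by simp [mul_comm]
    -- second moment of the gradients
    have hGsqle : ∀ j, j ≤ K →
        ∫ ω, ‖G j ω‖ ^ 2 ∂ℙ ≤ 3 * L ^ 2 * e j + 3 * σG ^ 2 + 3 * Z := by
      intro j hj
      have hpt : ∀ ω, ‖G j ω‖ ^ 2
          ≤ 3 * L ^ 2 * ‖y i j ω - xt‖ ^ 2 + 3 * σG ^ 2 + 3 * Z := by
        intro ω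
        have hlip := (hFlip i).dist_le_mul (y i j ω) xt
        rw [dist_eq_norm, dist_eq_norm, Real.coe_toNNReal L hL.le] at hlip
        have hhet' : ‖gradient (F i) xt - gradient f xt‖ ^ 2 ≤ σG ^ 2 := hhet i xt
        have htri : ‖G j ω‖ ≤ ‖G j ω - gradient (F i) xt‖
            + ‖gradient (F i) xt - gradient f xt‖ + ‖gradient f xt‖ := by
          have habel : (G j ω - gradient (F i) xt)
              + (gradient (F i) xt - gradient f xt) + gradient f xt = G j ω := by abel
          calc ‖G j ω‖ = ‖(G j ω - gradient (F i) xt)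
                + (gradient (F i) xt - gradient f xt) + gradient f xt‖ := by rw [habel]
            _ ≤ _ := norm_add₃_le
        nlinarith [norm_nonneg (G j ω), norm_nonneg (G j ω - gradient (F i) xt),
          norm_nonneg (gradient (F i) xt - gradient f xt), norm_nonneg (gradient f xt),
          norm_nonneg (y i j ω - xt), hL.le, sq_nonneg (‖G j ω - gradient (F i) xt‖
            - ‖gradient (F i) xt - gradient f xt‖),
          sq_nonneg (‖G j ω - gradient (F i) xt‖ - ‖gradient f xt‖),
          sq_nonneg (‖gradient (F i) xt - gradient f xt‖ - ‖gradient f xt‖)]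
      calc ∫ ω, ‖G j ω‖ ^ 2 ∂ℙ
          ≤ ∫ ω, (3 * L ^ 2 * ‖y i j ω - xt‖ ^ 2 + 3 * σG ^ 2 + 3 * Z) ∂ℙ := by
            refine integral_mono (hGsqint j hj) ?_ hpt
            exact (((hysqint j hj).const_mul _).add (integrable_const _)).add
              (integrable_const _)
        _ = 3 * L ^ 2 * e j + 3 * σG ^ 2 + 3 * Z := by
            have h1 : Integrable (fun ω => 3 * L ^ 2 * ‖y i j ω - xt‖ ^ 2) ℙ :=
              (hysqint j hj).const_mul (3 * L ^ 2)
            have h2 : Integrable (fun _ : Ω => 3 * σG ^ 2 + 3 * Z) ℙ := integrable_const _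
            have hre : (fun ω => 3 * L ^ 2 * ‖y i j ω - xt‖ ^ 2 + 3 * σG ^ 2 + 3 * Z)
                = fun ω => 3 * L ^ 2 * ‖y i j ω - xt‖ ^ 2 + (3 * σG ^ 2 + 3 * Z) := by
              funext ω; ring
            rw [hre, integral_add h1 h2, integral_const_mul, integral_const]
            have hej : ∫ ω, ‖y i j ω - xt‖ ^ 2 ∂ℙ = e j := rfl
            rw [hej]
            simp only [measure_univ, ENNReal.toReal_one, smul_eq_mul, one_mul, probReal_univ]
            ring
    have he0 : ∀ j, 0 ≤ e j := fun j => integral_nonneg fun ω => by positivity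
    -- the recursion
    have hrec : ∀ k, k ≤ K → e k ≤ B + ρ * ∑ j ∈ Finset.range k, e j := by
      intro k hk
      have hkK : (k:ℝ) ≤ (K:ℝ) := by exact_mod_cast hk
      have hmemK : ∀ j ∈ Finset.range k, j ≤ K := fun j hj =>
        le_trans (Finset.mem_range.1 hj).le hk
      have hSNaesm : AEStronglyMeasurable (fun ω => ∑ j ∈ Finset.range k, N j ω) ℙ :=
        Finset.aestronglyMeasurable_fun_sum _ fun j _ => hNaesm j
      have hSNsqint : Integrable (fun ω => ‖∑ j ∈ Finset.range k, N j ω‖ ^ 2) ℙ := by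
        refine Integrable.mono'
          ((integrable_finset_sum (Finset.range k) fun j hj =>
            hNsqint j (hmemK j hj)).const_mul (k:ℝ)) (hSNaesm.norm.pow 2) ?_
        filter_upwards with ω
        rw [Real.norm_eq_abs, abs_of_nonneg (by positivity)]
        have h1 : ‖∑ j ∈ Finset.range k, N j ω‖ ≤ ∑ j ∈ Finset.range k, ‖N j ω‖ :=
          norm_sum_le _ _
        have h2 : (∑ j ∈ Finset.range k, ‖N j ω‖) ^ 2
            ≤ k * ∑ j ∈ Finset.range k, ‖N j ω‖ ^ 2 := by
          simpa using sq_sum_le_card_mul_sum_sq (s := Finset.range k)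
            (f := fun j => ‖N j ω‖)
        nlinarith [norm_nonneg (∑ j ∈ Finset.range k, N j ω),
          Finset.sum_nonneg fun j (_ : j ∈ Finset.range k) => norm_nonneg (N j ω)]
      have hGSint : Integrable (fun ω => ∑ j ∈ Finset.range k, ‖G j ω‖ ^ 2) ℙ :=
        integrable_finset_sum _ fun j hj => hGsqint j (hmemK j hj)
      have hpt : ∀ ω, ‖y i k ω - xt‖ ^ 2
          ≤ 2 * ηL ^ 2 * ‖∑ j ∈ Finset.range k, N j ω‖ ^ 2
            + 2 * ηL ^ 2 * (k:ℝ) * ∑ j ∈ Finset.range k, ‖G j ω‖ ^ 2 := by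
        intro ω
        have hsplit : ∑ j ∈ Finset.range k, g i j ω
            = (∑ j ∈ Finset.range k, N j ω) + ∑ j ∈ Finset.range k, G j ω := by
          rw [← Finset.sum_add_distrib]
          exact Finset.sum_congr rfl fun j _ => by simp [hN]
        have h1 : ‖y i k ω - xt‖ = ηL * ‖∑ j ∈ Finset.range k, g i j ω‖ := by
          rw [hydiff k hk ω, norm_neg, norm_smul, Real.norm_eq_abs, abs_of_pos hηL]
        have h3 : ‖∑ j ∈ Finset.range k, g i j ω‖
            ≤ ‖∑ j ∈ Finset.range k, N j ω‖ + ‖∑ j ∈ Finset.range k, G j ω‖ := by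
          rw [hsplit]; exact norm_add_le _ _
        have h2 : ‖∑ j ∈ Finset.range k, G j ω‖ ^ 2
            ≤ k * ∑ j ∈ Finset.range k, ‖G j ω‖ ^ 2 := by
          have h4 : ‖∑ j ∈ Finset.range k, G j ω‖ ≤ ∑ j ∈ Finset.range k, ‖G j ω‖ :=
            norm_sum_le _ _
          have h5 : (∑ j ∈ Finset.range k, ‖G j ω‖) ^ 2
              ≤ k * ∑ j ∈ Finset.range k, ‖G j ω‖ ^ 2 := by
            simpa using sq_sum_le_card_mul_sum_sq (s := Finset.range k)
              (f := fun j => ‖G j ω‖)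
          nlinarith [norm_nonneg (∑ j ∈ Finset.range k, G j ω),
            Finset.sum_nonneg fun j (_ : j ∈ Finset.range k) => norm_nonneg (G j ω)]
        have hc2 : ‖∑ j ∈ Finset.range k, g i j ω‖ ^ 2
            ≤ 2 * ‖∑ j ∈ Finset.range k, N j ω‖ ^ 2
              + 2 * ((k:ℝ) * ∑ j ∈ Finset.range k, ‖G j ω‖ ^ 2) := by
          nlinarith [h2,
            mul_self_le_mul_self (norm_nonneg (∑ j ∈ Finset.range k, g i j ω)) h3,
            sq_nonneg (‖∑ j ∈ Finset.range k, N j ω‖ - ‖∑ j ∈ Finset.range k, G j ω‖)]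
        calc ‖y i k ω - xt‖ ^ 2
            = ηL ^ 2 * ‖∑ j ∈ Finset.range k, g i j ω‖ ^ 2 := by rw [h1]; ring
          _ ≤ _ := by nlinarith [mul_le_mul_of_nonneg_left hc2 (sq_nonneg ηL)]
      have hGsum : ∑ j ∈ Finset.range k, ∫ ω, ‖G j ω‖ ^ 2 ∂ℙ
          ≤ 3 * L ^ 2 * (∑ j ∈ Finset.range k, e j) + (k:ℝ) * (3 * σG ^ 2 + 3 * Z) := by
        calc ∑ j ∈ Finset.range k, ∫ ω, ‖G j ω‖ ^ 2 ∂ℙ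
            ≤ ∑ j ∈ Finset.range k, (3 * L ^ 2 * e j + 3 * σG ^ 2 + 3 * Z) :=
              Finset.sum_le_sum fun j hj => hGsqle j (hmemK j hj)
          _ = 3 * L ^ 2 * (∑ j ∈ Finset.range k, e j) + (k:ℝ) * (3 * σG ^ 2 + 3 * Z) := by
              rw [Finset.sum_add_distrib, Finset.sum_add_distrib, ← Finset.mul_sum]
              simp [Finset.sum_const, Finset.card_range]
              ring
      have hcoef : 2 * ηL ^ 2 * (k:ℝ) * (3 * L ^ 2) ≤ ρ := by
        rw [hρ, le_div_iff₀ (by positivity : (0:ℝ) < 32 * K)]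
        nlinarith [mul_self_le_mul_self
            (by positivity : (0:ℝ) ≤ ηL * L * (K:ℝ)) hηLL,
          mul_le_mul_of_nonneg_right (mul_le_mul_of_nonneg_left hkK
            (by positivity : (0:ℝ) ≤ ηL ^ 2 * L ^ 2)) hKpos.le]
      calc e k ≤ ∫ ω, (2 * ηL ^ 2 * ‖∑ j ∈ Finset.range k, N j ω‖ ^ 2
            + 2 * ηL ^ 2 * (k:ℝ) * ∑ j ∈ Finset.range k, ‖G j ω‖ ^ 2) ∂ℙ := by
            refine integral_mono (hysqint k hk) ?_ hpt
            exact (hSNsqint.const_mul _).add (hGSint.const_mul _)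
        _ = 2 * ηL ^ 2 * ∫ ω, ‖∑ j ∈ Finset.range k, N j ω‖ ^ 2 ∂ℙ
            + 2 * ηL ^ 2 * (k:ℝ) * ∑ j ∈ Finset.range k, ∫ ω, ‖G j ω‖ ^ 2 ∂ℙ := by
            rw [integral_add (hSNsqint.const_mul _) (hGSint.const_mul _),
              integral_const_mul, integral_const_mul,
              integral_finset_sum _ fun j hj => hGsqint j (hmemK j hj)]
        _ ≤ 2 * ηL ^ 2 * ((k:ℝ) * σL ^ 2)
            + 2 * ηL ^ 2 * (k:ℝ) * (3 * L ^ 2 * (∑ j ∈ Finset.range k, e j)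
              + (k:ℝ) * (3 * σG ^ 2 + 3 * Z)) := by
            have h1 := hsumN k hk
            have h2 : (0:ℝ) ≤ 2 * ηL ^ 2 := by positivity
            have h3 : (0:ℝ) ≤ 2 * ηL ^ 2 * (k:ℝ) := by positivity
            exact add_le_add (mul_le_mul_of_nonneg_left h1 h2)
              (mul_le_mul_of_nonneg_left hGsum h3)
        _ ≤ B + ρ * ∑ j ∈ Finset.range k, e j := by
            have hk0 : (0:ℝ) ≤ (k:ℝ) := Nat.cast_nonneg k
            have hsum0 : 0 ≤ ∑ j ∈ Finset.range k, e j :=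
              Finset.sum_nonneg fun j _ => he0 j
            have h5 : 2 * ηL ^ 2 * (k:ℝ) * (3 * L ^ 2) * (∑ j ∈ Finset.range k, e j)
                ≤ ρ * ∑ j ∈ Finset.range k, e j :=
              mul_le_mul_of_nonneg_right hcoef hsum0
            have p1 : 2 * ηL ^ 2 * ((k:ℝ) * σL ^ 2) ≤ 2 * K * ηL ^ 2 * σL ^ 2 := by
              nlinarith [mul_le_mul_of_nonneg_left hkK
                (by positivity : (0:ℝ) ≤ 2 * ηL ^ 2 * σL ^ 2)]
            have p3 : 2 * ηL ^ 2 * (k:ℝ) * ((k:ℝ) * (3 * σG ^ 2 + 3 * Z))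
                ≤ 6 * K ^ 2 * ηL ^ 2 * (σG ^ 2 + Z) := by
              nlinarith [mul_le_mul_of_nonneg_left (mul_self_le_mul_self hk0 hkK)
                (by positivity : (0:ℝ) ≤ 2 * ηL ^ 2 * (σG ^ 2 + Z))]
            have p2 : 2 * ηL ^ 2 * (k:ℝ) * (3 * L ^ 2 * ∑ j ∈ Finset.range k, e j)
                ≤ ρ * ∑ j ∈ Finset.range k, e j := by nlinarith [h5]
            rw [hB]
            linarith [p1, p2, p3]
    -- discrete Gronwall
    have hne : (1:ℝ) + ρ ≠ 1 := by nlinarith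
    have hgron : ∀ k, k ≤ K → e k ≤ B * (1 + ρ) ^ k := by
      intro k
      induction k using Nat.strong_induction_on with
      | _ k ih =>
        intro hk
        have h2 : ∑ j ∈ Finset.range k, e j ≤ ∑ j ∈ Finset.range k, B * (1 + ρ) ^ j :=
          Finset.sum_le_sum fun j hj => ih j (Finset.mem_range.1 hj)
            (le_trans (Finset.mem_range.1 hj).le hk)
        have h3 : ∑ j ∈ Finset.range k, B * (1 + ρ) ^ j
            = B * (((1 + ρ) ^ k - 1) / ρ) := by
          rw [← Finset.mul_sum, geom_sum_eq hne]
          have : (1:ℝ) + ρ - 1 = ρ := by ring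
          rw [this]
        calc e k ≤ B + ρ * ∑ j ∈ Finset.range k, e j := hrec k hk
          _ ≤ B + ρ * (B * (((1 + ρ) ^ k - 1) / ρ)) := by
              have := h2.trans_eq h3
              nlinarith
          _ = B * (1 + ρ) ^ k := by field_simp; ring
    -- conclude
    intro k hk
    have hK1 : (1:ℝ) ≤ (K:ℝ) := by exact_mod_cast hK
    have hρle : ρ * K = 3 / 32 := by rw [hρ]; field_simp
    have hρ32 : ρ ≤ 3 / 32 := by
      rw [hρ]
      rw [div_le_div_iff₀ (by positivity) (by norm_num)]
      nlinarith [hK1]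
    have h29 : (29/32:ℝ) ≤ (1 - ρ) ^ K := by
      have h := one_add_mul_le_pow (a := -ρ) (by nlinarith : (-2:ℝ) ≤ -ρ) K
      have e1 : (1:ℝ) + -ρ = 1 - ρ := by ring
      rw [e1] at h
      have e2 : (K:ℝ) * -ρ = -(3/32) := by
        have : (K:ℝ) * -ρ = -(ρ * K) := by ring
        rw [this, hρle]
      rw [e2] at h
      linarith
    have hmulpow : (1 + ρ) ^ K * (1 - ρ) ^ K ≤ 1 := by
      rw [← mul_pow]
      have e3 : (1 + ρ) * (1 - ρ) = 1 - ρ ^ 2 := by ring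
      rw [e3]
      exact pow_le_one₀ (by nlinarith) (by nlinarith)
    have hpowK : (1 + ρ) ^ K ≤ 32 / 29 := by
      have ha : (0:ℝ) ≤ (1 + ρ) ^ K := by positivity
      nlinarith [mul_le_mul_of_nonneg_left h29 ha]
    have hpowk : (1 + ρ) ^ k ≤ (1 + ρ) ^ K :=
      pow_le_pow_right₀ (by nlinarith) hk
    calc e k ≤ B * (1 + ρ) ^ k := hgron k hk
      _ ≤ B * (32 / 29) := by nlinarith [pow_nonneg (by nlinarith : (0:ℝ) ≤ 1 + ρ) k]
      _ ≤ 5 * K * ηL ^ 2 * σL ^ 2 + 30 * K ^ 2 * ηL ^ 2 * σG ^ 2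
          + 30 * K ^ 2 * ηL ^ 2 * Z := by
          have m1 : (0:ℝ) ≤ (K:ℝ) * ηL ^ 2 * σL ^ 2 := by positivity
          have m2 : (0:ℝ) ≤ (K:ℝ) ^ 2 * ηL ^ 2 * σG ^ 2 := by positivity
          have m3 : (0:ℝ) ≤ (K:ℝ) ^ 2 * ηL ^ 2 * Z := by positivity
          rw [hB]
          nlinarith
  -- average over the workers
  intro k hk
  have hmpos : (0:ℝ) < (m:ℝ) := by exact_mod_cast hm
  have hsum : ∑ i, ∫ ω, ‖y i k ω - xt‖ ^ 2 ∂ℙ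
      ≤ (m:ℝ) * (5 * K * ηL ^ 2 * σL ^ 2 + 30 * K ^ 2 * ηL ^ 2 * σG ^ 2
        + 30 * K ^ 2 * ηL ^ 2 * Z) := by
    calc ∑ i, ∫ ω, ‖y i k ω - xt‖ ^ 2 ∂ℙ
        ≤ ∑ _i : Fin m, (5 * K * ηL ^ 2 * σL ^ 2 + 30 * K ^ 2 * ηL ^ 2 * σG ^ 2
          + 30 * K ^ 2 * ηL ^ 2 * Z) := Finset.sum_le_sum fun i _ => key i k hk
      _ = (m:ℝ) * _ := by simp [Finset.sum_const, Finset.card_univ]; ring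
  calc (1 / (m : ℝ)) * ∑ i, ∫ ω, ‖y i k ω - xt‖ ^ 2 ∂ℙ
      ≤ (1 / (m : ℝ)) * ((m:ℝ) * (5 * K * ηL ^ 2 * σL ^ 2 + 30 * K ^ 2 * ηL ^ 2 * σG ^ 2
        + 30 * K ^ 2 * ηL ^ 2 * Z)) :=
        mul_le_mul_of_nonneg_left hsum (by positivity)
    _ = 5 * K * ηL ^ 2 * σL ^ 2 + 30 * K ^ 2 * ηL ^ 2 * σG ^ 2
        + 30 * K ^ 2 * ηL ^ 2 * Z := by field_simp
    _ = 5 * K * ηL ^ 2 * (σL ^ 2 + 6 * K * σG ^ 2) + 30 * K ^ 2 * ηL ^ 2 * Z := by ring
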